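/- The twisted Cayley transform C_κ(y) = (1 - y(1-κ))/(1 + y(1+κ)) intertwines the product a •_κ b = (a+b+2abκ)/(1+ab(1-κ²)) with multiplication: C_κ(a •_κ b) = C_κ(a)·C_κ(b), whenever 1+a(1+κ) ≠ 0, 1+b(1+κ) ≠ 0, 1+ab(1-κ²) ≠ 0, and 1 + (a •_κ b)(1+κ) ≠ 0. -/

import Mathlib

/-- The broken product `a •_κ b = (a+b+2abκ)/(1+ab(1-κ²))`. -/
noncomputable def bulletK (κ a b : ℂ) : ℂ :=
  (a + b + 2 * a * b * κ) / (1 + a * b * (1 - κ ^ 2))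

/-- The twisted Cayley transform `C_κ(y) = (1-y(1-κ))/(1+y(1+κ))`. -/
noncomputable def CayleyK (κ y : ℂ) : ℂ := (1 - y * (1 - κ)) / (1 + y * (1 + κ))

/-- `C_κ` intertwines `•_κ` with multiplication. -/
theorem CayleyK_intertwines (κ a b : ℂ)
    (ha : 1 + a * (1 + κ) ≠ 0) (hb : 1 + b * (1 + κ) ≠ 0)
    (hab : 1 + a * b * (1 - κ ^ 2) ≠ 0)
    (hbul : 1 + bulletK κ a b * (1 + κ) ≠ 0) :
    CayleyK κ (bulletK κ a b) = CayleyK κ a * CayleyK κ b := by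
  rw [bulletK] at hbul ⊢
  rw [CayleyK, CayleyK, CayleyK]
  rw [div_mul_eq_mul_div, one_sub_div hab, div_mul_eq_mul_div, one_add_div hab,
    div_div_div_cancel_right₀ hab]
  rw [div_mul_eq_mul_div, one_add_div hab] at hbul
  have h2 : 1 + a * b * (1 - κ ^ 2) + (a + b + 2 * a * b * κ) * (1 + κ) ≠ 0 := by
    intro h
    exact hbul (by rw [h, zero_div])
  rw [div_mul_div_comm, div_eq_div_iff h2 (mul_ne_zero ha hb)]
  ring
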